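/- Let v be a vertex of minimum tenacity t_m < l_m. Then every maxlevel(v) path contains a unique bridge of tenacity t_m. -/

import Mathlib

open scoped Classical

universe u

variable {V : Type u}

/-- A finite-or-infinite undirected graph together with a matching. -/
structure MatchedGraph (V : Type u) where
  adj : V → V → Prop
  symm : ∀ u v, adj u v → adj v u
  loopless : ∀ v, ¬ adj v v
  M : V → V → Prop
  M_symm : ∀ u v, M u v → M v u
  M_sub : ∀ u v, M u v → adj u v
  M_matching : ∀ u v w, M u v → M u w → v = w

namespace MatchedGraph

/-- A vertex is unmatched if no matched edge is incident to it. -/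
def unmatched (g : MatchedGraph V) (v : V) : Prop := ∀ u, ¬ g.M v u

/-- `p` is a simple alternating path starting at `b` and ending at `v`,
whose first edge is unmatched and whose edges alternate unmatched/matched.
(The `i`-th edge is matched iff `i` is odd.) -/
def AltPath (g : MatchedGraph V) (p : List V) (b v : V) : Prop :=
  p.head? = some b ∧ p.getLast? = some v ∧ p.Nodup ∧
  ∀ i, i + 1 < p.length →
    g.adj (p.getD i b) (p.getD (i + 1) b) ∧
      (g.M (p.getD i b) (p.getD (i + 1) b) ↔ i % 2 = 1)

/-- An alternating path from an *unmatched* vertex `f` to `v`. -/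
def AltPathFrom (g : MatchedGraph V) (p : List V) (f v : V) : Prop :=
  g.unmatched f ∧ g.AltPath p f v

/-- Minimum length of an even alternating path from an unmatched vertex to `v`. -/
noncomputable def evenlevel (g : MatchedGraph V) (v : V) : ℕ∞ :=
  sInf {n : ℕ∞ | ∃ p f, g.AltPathFrom p f v ∧ Even (p.length - 1) ∧
    n = ((p.length - 1 : ℕ) : ℕ∞)}

/-- Minimum length of an odd alternating path from an unmatched vertex to `v`. -/
noncomputable def oddlevel (g : MatchedGraph V) (v : V) : ℕ∞ :=
  sInf {n : ℕ∞ | ∃ p f, g.AltPathFrom p f v ∧ Odd (p.length - 1) ∧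
    n = ((p.length - 1 : ℕ) : ℕ∞)}

noncomputable def tenacity (g : MatchedGraph V) (v : V) : ℕ∞ :=
  g.evenlevel v + g.oddlevel v

noncomputable def minlevel (g : MatchedGraph V) (v : V) : ℕ∞ :=
  min (g.evenlevel v) (g.oddlevel v)

noncomputable def maxlevel (g : MatchedGraph V) (v : V) : ℕ∞ :=
  max (g.evenlevel v) (g.oddlevel v)

/-- Minimum length of an augmenting path: an alternating path between two
distinct unmatched vertices. -/
noncomputable def lm (g : MatchedGraph V) : ℕ∞ :=
  sInf {n : ℕ∞ | ∃ p f v, g.AltPathFrom p f v ∧ g.unmatched v ∧ f ≠ v ∧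
    n = ((p.length - 1 : ℕ) : ℕ∞)}

/-- Minimum tenacity of any vertex. -/
noncomputable def tm (g : MatchedGraph V) : ℕ∞ := ⨅ v, g.tenacity v

/-- `p` is an `evenlevel(v)` path starting at the unmatched vertex `f`. -/
def IsEvenlevelPath (g : MatchedGraph V) (p : List V) (f v : V) : Prop :=
  g.AltPathFrom p f v ∧ Even (p.length - 1) ∧
    ((p.length - 1 : ℕ) : ℕ∞) = g.evenlevel v

/-- `p` is an `oddlevel(v)` path starting at the unmatched vertex `f`. -/
def IsOddlevelPath (g : MatchedGraph V) (p : List V) (f v : V) : Prop :=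
  g.AltPathFrom p f v ∧ Odd (p.length - 1) ∧
    ((p.length - 1 : ℕ) : ℕ∞) = g.oddlevel v

/-- `p` is a `minlevel(v)` path starting at the unmatched vertex `f`. -/
def IsMinlevelPath (g : MatchedGraph V) (p : List V) (f v : V) : Prop :=
  g.AltPathFrom p f v ∧ ((p.length - 1 : ℕ) : ℕ∞) = g.minlevel v

/-- `p` is a `maxlevel(v)` path starting at the unmatched vertex `f`. -/
def IsMaxlevelPath (g : MatchedGraph V) (p : List V) (f v : V) : Prop :=
  g.AltPathFrom p f v ∧ ((p.length - 1 : ℕ) : ℕ∞) = g.maxlevel v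

/-- The vertex at position `i` of `p` (whose prefix from `f` has length `i`)
is BFS-honest w.r.t. `p`. -/
def BFSHonest (g : MatchedGraph V) (p : List V) (f : V) (i : ℕ) : Prop :=
  (Even i → g.evenlevel (p.getD i f) = (i : ℕ∞)) ∧
  (Odd i → g.oddlevel (p.getD i f) = (i : ℕ∞))

/-- `u` is a predecessor of `v`: `(u, v)` is the last edge of some
`minlevel(v)` path. -/
def IsPred (g : MatchedGraph V) (u v : V) : Prop :=
  ∃ p f, g.IsMinlevelPath p f v ∧ 2 ≤ p.length ∧ p.getD (p.length - 2) f = u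

/-- A prop is an edge which is the last edge of a minlevel path to one of its
endpoints. -/
def IsPropEdge (g : MatchedGraph V) (u v : V) : Prop :=
  g.IsPred u v ∨ g.IsPred v u

/-- A bridge is an edge that is not a prop. -/
def IsBridge (g : MatchedGraph V) (u v : V) : Prop :=
  g.adj u v ∧ ¬ g.IsPropEdge u v

/-- Tenacity of an edge. -/
noncomputable def etenacity (g : MatchedGraph V) (u v : V) : ℕ∞ :=
  if g.M u v then g.oddlevel u + g.oddlevel v + 1
  else g.evenlevel u + g.evenlevel v + 1

/-- The set `B(v)` of all `F(p, v)`: for each `evenlevel(v)` or `oddlevel(v)`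
path `p`, the vertex on `p` farthest from the unmatched endpoint among the
vertices of tenacity greater than `tenacity(v)`. -/
def Bset (g : MatchedGraph V) (v : V) : Set V :=
  {b | ∃ p f i, (g.IsEvenlevelPath p f v ∨ g.IsOddlevelPath p f v) ∧
    i < p.length ∧ b = p.getD i f ∧ g.tenacity v < g.tenacity b ∧
    ∀ k, i < k → k < p.length → g.tenacity (p.getD k f) ≤ g.tenacity v}

/-- `b` is the (unique) base of `v`. -/
def baseOf (g : MatchedGraph V) (v b : V) : Prop := g.Bset v = {b}

/-- Iterated bases: `iterBase k v b` means `b = base^k(v)` (with `base^0(v) = v`). -/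
def iterBase (g : MatchedGraph V) : ℕ → V → V → Prop
  | 0, v, b => v = b
  | k + 1, v, b => ∃ u, g.iterBase k v u ∧ g.baseOf u b

/-- A vertex is outer if `evenlevel(v) < oddlevel(v)`. -/
def IsOuter (g : MatchedGraph V) (v : V) : Prop := g.evenlevel v < g.oddlevel v

/-- A vertex is inner if it is not outer. -/
def IsInner (g : MatchedGraph V) (v : V) : Prop := g.oddlevel v ≤ g.evenlevel v

/-- The set `S_{b,t}` of vertices of tenacity `t` with base `b`. -/
def Sset (g : MatchedGraph V) (t : ℕ) (b : V) : Set V :=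
  {v | g.tenacity v = (t : ℕ∞) ∧ g.baseOf v b}

/-- The blossom `B_{b,t}`, defined recursively. -/
def blossom (g : MatchedGraph V) : ℕ → V → Set V
  | 0, _ => ∅
  | 1, _ => ∅
  | t + 2, b => g.Sset (t + 2) b ∪
      ⋃ v ∈ {v | (v ∈ g.Sset (t + 2) b ∨ v = b) ∧ g.IsOuter v}, blossom g t v

/-- The nesting depth `N(B_{b,t})` of a blossom. -/
noncomputable def ndepth (g : MatchedGraph V) [Fintype V] : ℕ → V → ℕ
  | 0, _ => 0
  | 1, _ => 0
  | t + 2, b =>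
    if (g.Sset (t + 2) b).Nonempty then
      1 + Finset.univ.sup (fun v =>
        if (v ∈ g.Sset (t + 2) b ∨ v = b) ∧ g.IsOuter v then ndepth g t v else 0)
    else ndepth g t b

/-- `evenlevel(b; v)`: minimum even length of an alternating path from `b` to
`v` starting with an unmatched edge. -/
noncomputable def evenlevelFrom (g : MatchedGraph V) (b v : V) : ℕ∞ :=
  sInf {n : ℕ∞ | ∃ p, g.AltPath p b v ∧ Even (p.length - 1) ∧
    n = ((p.length - 1 : ℕ) : ℕ∞)}

/-- `oddlevel(b; v)`: minimum odd length of an alternating path from `b` to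
`v` starting with an unmatched edge. -/
noncomputable def oddlevelFrom (g : MatchedGraph V) (b v : V) : ℕ∞ :=
  sInf {n : ℕ∞ | ∃ p, g.AltPath p b v ∧ Odd (p.length - 1) ∧
    n = ((p.length - 1 : ℕ) : ℕ∞)}

end MatchedGraph



lemma ENat.sInf_mem' {S : Set ℕ∞} (h : sInf S ≠ ⊤) : sInf S ∈ S := by
  have hex : ∃ n : ℕ, (n : ℕ∞) ∈ S := by
    by_contra hc
    push_neg at hc
    apply h
    have hall : ∀ b ∈ S, b = (⊤ : ℕ∞) := by
      intro b hb
      cases b with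
      | top => rfl
      | coe m => exact absurd hb (hc m)
    apply le_antisymm le_top
    exact le_sInf (fun b hb => (hall b hb).symm ▸ le_rfl)
  classical
  have hTne : {m : ℕ | (m : ℕ∞) ∈ S}.Nonempty := hex
  have hk : sInf S = ((sInf {m : ℕ | (m : ℕ∞) ∈ S} : ℕ) : ℕ∞) := by
    apply le_antisymm
    · exact sInf_le (Nat.sInf_mem hTne)
    · apply le_sInf
      intro b hb
      cases b with
      | top => exact le_top
      | coe m => exact_mod_cast Nat.sInf_le (hb : (m:ℕ∞) ∈ S)
  rw [hk]
  exact Nat.sInf_mem hTne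

namespace MatchedGraph

/-- explicit path list built from a vertex function -/
def pathOf (w : ℕ → V) (n : ℕ) : List V := (List.range (n + 1)).map w

@[simp] lemma pathOf_length (w : ℕ → V) (n : ℕ) : (pathOf w n).length = n + 1 := by
  simp [pathOf]

lemma pathOf_getElem (w : ℕ → V) (n i : ℕ) (h : i < n + 1) :
    (pathOf w n)[i]'(by simpa using h) = w i := by
  simp [pathOf]

lemma pathOf_getD (w : ℕ → V) (n i : ℕ) (h : i ≤ n) (d : V) :
    (pathOf w n).getD i d = w i := by
  rw [List.getD_eq_getElem _ _ (by simp; omega), pathOf_getElem w n i (by omega)]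

/-- bundled hypotheses: `w 0 … w n` is an alternating path from an unmatched vertex -/
structure PathFun (g : MatchedGraph V) (w : ℕ → V) (n : ℕ) : Prop where
  unm : g.unmatched (w 0)
  adj : ∀ i, i < n → g.adj (w i) (w (i + 1))
  mat : ∀ i, i < n → (g.M (w i) (w (i + 1)) ↔ i % 2 = 1)
  inj : ∀ i, i ≤ n → ∀ j, j ≤ n → w i = w j → i = j

lemma PathFun.mono {g : MatchedGraph V} {w : ℕ → V} {n n' : ℕ} (h : PathFun g w n)
    (hle : n' ≤ n) : PathFun g w n' :=
  ⟨h.unm, fun i hi => h.adj i (lt_of_lt_of_le hi hle),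
   fun i hi => h.mat i (lt_of_lt_of_le hi hle),
   fun i hi j hj => h.inj i (le_trans hi hle) j (le_trans hj hle)⟩

lemma PathFun.altPathFrom {g : MatchedGraph V} {w : ℕ → V} {n : ℕ} (h : PathFun g w n) :
    g.AltPathFrom (pathOf w n) (w 0) (w n) := by
  refine ⟨h.unm, ?_, ?_, ?_, ?_⟩
  · rw [List.head?_eq_getElem?, List.getElem?_eq_getElem (by simp)]
    rw [pathOf_getElem w n 0 (by omega)]
  · rw [List.getLast?_eq_getElem?, List.getElem?_eq_getElem (by simp)]
    have : (pathOf w n).length - 1 = n := by simp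
    simp only [this]
    rw [pathOf_getElem w n n (by omega)]
  · apply List.Nodup.map_on _ List.nodup_range
    intro x hx y hy hxy
    rw [List.mem_range] at hx hy
    exact h.inj x (by omega) y (by omega) hxy
  · intro i hi
    rw [pathOf_length] at hi
    rw [pathOf_getD w n i (by omega), pathOf_getD w n (i+1) (by omega)]
    exact ⟨h.adj i (by omega), h.mat i (by omega)⟩

lemma PathFun.length_sub_one {w : ℕ → V} {n : ℕ} : (pathOf w n).length - 1 = n := by simp

/-- unpack an `AltPathFrom` into a `PathFun` -/
lemma unpack {g : MatchedGraph V} {p : List V} {f x : V} (h : g.AltPathFrom p f x) :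
    PathFun g (fun i => p.getD i f) (p.length - 1) ∧
      p.getD 0 f = f ∧ p.getD (p.length - 1) f = x ∧ 1 ≤ p.length := by
  obtain ⟨hunm, hhead, hlast, hnd, halt⟩ := h
  have hne : p ≠ [] := by
    intro hcon; rw [hcon] at hhead; simp at hhead
  have hlen : 1 ≤ p.length := List.length_pos_iff.2 hne
  have h0 : p.getD 0 f = f := by
    rw [List.getD_eq_getElem _ _ (by omega)]
    rw [List.head?_eq_getElem?, List.getElem?_eq_getElem (by omega)] at hhead
    exact Option.some_injective _ hhead
  have hL : p.getD (p.length - 1) f = x := by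
    rw [List.getD_eq_getElem _ _ (by omega)]
    rw [List.getLast?_eq_getElem?, List.getElem?_eq_getElem (by omega)] at hlast
    exact Option.some_injective _ hlast
  refine ⟨⟨by rw [h0]; exact hunm, ?_, ?_, ?_⟩, h0, hL, hlen⟩
  · intro i hi; exact (halt i (by omega)).1
  · intro i hi; exact (halt i (by omega)).2
  · intro i hi j hj hij
    rw [List.getD_eq_getElem _ _ (by omega), List.getD_eq_getElem _ _ (by omega)] at hij
    exact (List.Nodup.getElem_inj_iff hnd (hi := by omega) (hj := by omega)).1 hij

end MatchedGraph

namespace MatchedGraph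

/-- level of parity `k` -/
noncomputable def lvl (g : MatchedGraph V) (k : ℕ) (x : V) : ℕ∞ :=
  if k % 2 = 0 then g.evenlevel x else g.oddlevel x

lemma lvl_congr (g : MatchedGraph V) {k k' : ℕ} (h : k % 2 = k' % 2) (x : V) :
    g.lvl k x = g.lvl k' x := by
  unfold lvl; rw [h]

lemma tenacity_eq_lvl (g : MatchedGraph V) (k : ℕ) (x : V) :
    g.tenacity x = g.lvl k x + g.lvl (k + 1) x := by
  unfold lvl tenacity
  rcases Nat.even_or_odd k with h | h
  · rw [Nat.even_iff] at h
    simp [h, Nat.add_mod, if_neg (by omega : ¬ (k+1) % 2 = 0)]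
  · rw [Nat.odd_iff] at h
    rw [if_neg (by omega), if_pos (by omega)]
    exact add_comm _ _

lemma minlevel_eq_lvl (g : MatchedGraph V) (k : ℕ) (x : V) :
    g.minlevel x = min (g.lvl k x) (g.lvl (k + 1) x) := by
  unfold lvl minlevel
  rcases Nat.even_or_odd k with h | h
  · rw [Nat.even_iff] at h
    rw [if_pos (by omega), if_neg (by omega)]
  · rw [Nat.odd_iff] at h
    rw [if_neg (by omega), if_pos (by omega), min_comm]

lemma maxlevel_eq_lvl (g : MatchedGraph V) (k : ℕ) (x : V) :
    g.maxlevel x = max (g.lvl k x) (g.lvl (k + 1) x) := by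
  unfold lvl maxlevel
  rcases Nat.even_or_odd k with h | h
  · rw [Nat.even_iff] at h
    rw [if_pos (by omega), if_neg (by omega)]
  · rw [Nat.odd_iff] at h
    rw [if_neg (by omega), if_pos (by omega), max_comm]

lemma lvl_le_of_altPathFrom (g : MatchedGraph V) {p : List V} {f x : V}
    (h : g.AltPathFrom p f x) : g.lvl (p.length - 1) x ≤ ((p.length - 1 : ℕ) : ℕ∞) := by
  unfold lvl
  split
  · exact sInf_le ⟨p, f, h, by rwa [Nat.even_iff], rfl⟩
  · exact sInf_le ⟨p, f, h, by rw [Nat.odd_iff]; omega, rfl⟩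

lemma PathFun.lvl_le {g : MatchedGraph V} {w : ℕ → V} {n : ℕ} (h : PathFun g w n) :
    g.lvl n (w n) ≤ (n : ℕ∞) := by
  have := g.lvl_le_of_altPathFrom h.altPathFrom
  rwa [PathFun.length_sub_one] at this

lemma lvl_exists (g : MatchedGraph V) {k : ℕ} {x : V} (h : g.lvl k x ≠ ⊤) :
    ∃ w n, PathFun g w n ∧ w n = x ∧ n % 2 = k % 2 ∧ g.lvl k x = (n : ℕ∞) := by
  unfold lvl at h ⊢
  split at h <;> rename_i hk
  · obtain ⟨p, f, hpf, hev, hn⟩ := ENat.sInf_mem' h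
    obtain ⟨hPF, h0, hL, hlen⟩ := unpack hpf
    rw [Nat.even_iff] at hev
    rw [if_pos hk]
    exact ⟨_, _, hPF, hL, by omega, hn⟩
  · obtain ⟨p, f, hpf, hev, hn⟩ := ENat.sInf_mem' h
    obtain ⟨hPF, h0, hL, hlen⟩ := unpack hpf
    rw [Nat.odd_iff] at hev
    rw [if_neg hk]
    exact ⟨_, _, hPF, hL, by omega, hn⟩

lemma lvl_parity (g : MatchedGraph V) {k n : ℕ} {x : V} (h : g.lvl k x = (n : ℕ∞)) :
    n % 2 = k % 2 := by
  have hne : g.lvl k x ≠ ⊤ := by rw [h]; exact (by simp : ((n:ℕ∞) ≠ ⊤))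
  obtain ⟨w, m, _, _, hpar, heq⟩ := g.lvl_exists hne
  rw [h] at heq
  have : n = m := by exact_mod_cast heq
  omega

lemma tm_le_tenacity (g : MatchedGraph V) (x : V) : g.tm ≤ g.tenacity x := iInf_le _ x

end MatchedGraph

namespace MatchedGraph

/-- Gluing a prefix of `qv` to a suffix of `u` at a same-parity crossing yields an
alternating path to `u L`; comparing with `maxlevel` gives `t ≤ j`. -/
lemma glue_bound (g : MatchedGraph V) {u qv : ℕ → V} {L c t j : ℕ}
    (hu : PathFun g u L) (hq : PathFun g qv c)
    (hlvlL : g.lvl L (u L) = (L : ℕ∞))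
    (ht : t ≤ L) (hj : j ≤ c) (hcross : qv j = u t) (hpar : j % 2 = t % 2)
    (hnab : ∀ t', t < t' → t' ≤ L → ∀ j', j' ≤ j → qv j' ≠ u t') :
    t ≤ j := by
  set n := j + (L - t) with hn
  set w : ℕ → V := fun a => if a ≤ j then qv a else u (t + (a - j)) with hw
  have hwval_lo : ∀ a, a ≤ j → w a = qv a := by intro a ha; simp [hw, ha]
  have hwval_hi : ∀ a, j < a → w a = u (t + (a - j)) := by
    intro a ha
    simp only [hw]
    rw [if_neg (by omega)]
  have hpf : PathFun g w n := by
    refine ⟨?_, ?_, ?_, ?_⟩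
    · rw [hwval_lo 0 (by omega)]; exact hq.unm
    · intro i hi
      rcases lt_trichotomy i j with h | h | h
      · rw [hwval_lo i (by omega), hwval_lo (i+1) (by omega)]
        exact hq.adj i (by omega)
      · subst h
        rw [hwval_lo i (by omega), hwval_hi (i+1) (by omega), hcross]
        have : t + (i + 1 - i) = t + 1 := by omega
        rw [this]
        exact hu.adj t (by omega)
      · rw [hwval_hi i (by omega), hwval_hi (i+1) (by omega)]
        have h1 : t + (i + 1 - j) = t + (i - j) + 1 := by omega
        rw [h1]
        exact hu.adj (t + (i - j)) (by omega)
    · intro i hi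
      rcases lt_trichotomy i j with h | h | h
      · rw [hwval_lo i (by omega), hwval_lo (i+1) (by omega)]
        exact hq.mat i (by omega)
      · subst h
        rw [hwval_lo i (by omega), hwval_hi (i+1) (by omega), hcross]
        have : t + (i + 1 - i) = t + 1 := by omega
        rw [this]
        have := hu.mat t (by omega)
        rw [this]
        omega
      · rw [hwval_hi i (by omega), hwval_hi (i+1) (by omega)]
        have h1 : t + (i + 1 - j) = t + (i - j) + 1 := by omega
        rw [h1]
        have := hu.mat (t + (i - j)) (by omega)
        rw [this]
        omega
    · intro a ha b hb hab
      rcases le_or_gt a j with h1 | h1 <;> rcases le_or_gt b j with h2 | h2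
      · rw [hwval_lo a h1, hwval_lo b h2] at hab
        exact hq.inj a (by omega) b (by omega) hab
      · rw [hwval_lo a h1, hwval_hi b h2] at hab
        exact absurd hab (hnab (t + (b - j)) (by omega) (by omega) a h1)
      · rw [hwval_hi a h1, hwval_lo b h2] at hab
        exact absurd hab.symm (hnab (t + (a - j)) (by omega) (by omega) b h2)
      · rw [hwval_hi a h1, hwval_hi b h2] at hab
        have := hu.inj (t + (a - j)) (by omega) (t + (b - j)) (by omega) hab
        omega
  have hwn : w n = u L := by
    rcases le_or_gt n j with h | h
    · have h1 : t = L := by omega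
      have h2 : n = j := by omega
      rw [h2, hwval_lo j le_rfl, hcross, h1]
    · rw [hwval_hi n h]
      have : t + (n - j) = L := by omega
      rw [this]
  have hle := hpf.lvl_le
  rw [hwn] at hle
  have hcongr : g.lvl n (u L) = g.lvl L (u L) := g.lvl_congr (by omega) _
  rw [hcongr, hlvlL] at hle
  have : L ≤ n := by exact_mod_cast hle
  omega

/-- Gluing `qv` (ending at `u L`) with the reversed suffix of `u` from `L` down to `i`. -/
lemma revglue (g : MatchedGraph V) {u qv : ℕ → V} {L s i : ℕ}
    (hu : PathFun g u L) (hq : PathFun g qv s)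
    (hqs : qv s = u L) (hi : i < L)
    (hdisj : ∀ k, i ≤ k → k < L → ∀ jj, jj ≤ s → qv jj ≠ u k)
    (hpar : (s + L) % 2 = 1) :
    ∃ w : ℕ → V, PathFun g w (s + (L - i)) ∧ w (s + (L - i)) = u i ∧
      w (s + (L - i) - 1) = u (i + 1) ∧ w 0 = qv 0 := by
  set n := s + (L - i) with hn
  set w : ℕ → V := fun a => if a ≤ s then qv a else u (L - (a - s)) with hw
  have hwval_lo : ∀ a, a ≤ s → w a = qv a := by intro a ha; simp [hw, ha]
  have hwval_hi : ∀ a, s < a → w a = u (L - (a - s)) := by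
    intro a ha
    simp only [hw]
    rw [if_neg (by omega)]
  have hMsymm : ∀ x y : V, g.M x y ↔ g.M y x := fun x y => ⟨g.M_symm x y, g.M_symm y x⟩
  refine ⟨w, ⟨?_, ?_, ?_, ?_⟩, ?_, ?_, hwval_lo 0 (by omega)⟩
  · rw [hwval_lo 0 (by omega)]; exact hq.unm
  · intro a ha
    rcases lt_trichotomy a s with h | h | h
    · rw [hwval_lo a (by omega), hwval_lo (a+1) (by omega)]
      exact hq.adj a (by omega)
    · subst h
      rw [hwval_lo a (by omega), hwval_hi (a+1) (by omega), hqs]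
      have h1 : L - (a + 1 - a) = L - 1 := by omega
      rw [h1]
      have := hu.adj (L - 1) (by omega)
      have h2 : L - 1 + 1 = L := by omega
      rw [h2] at this
      exact g.symm _ _ this
    · rw [hwval_hi a (by omega), hwval_hi (a+1) (by omega)]
      have hk : L - (a - s) = (L - (a + 1 - s)) + 1 := by omega
      rw [hk]
      exact g.symm _ _ (hu.adj (L - (a + 1 - s)) (by omega))
  · intro a ha
    rcases lt_trichotomy a s with h | h | h
    · rw [hwval_lo a (by omega), hwval_lo (a+1) (by omega)]
      exact hq.mat a (by omega)
    · subst h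
      rw [hwval_lo a (by omega), hwval_hi (a+1) (by omega), hqs]
      have h1 : L - (a + 1 - a) = L - 1 := by omega
      rw [h1]
      rw [hMsymm]
      have := hu.mat (L - 1) (by omega)
      have h2 : L - 1 + 1 = L := by omega
      rw [h2] at this
      rw [this]
      omega
    · rw [hwval_hi a (by omega), hwval_hi (a+1) (by omega)]
      have hk : L - (a - s) = (L - (a + 1 - s)) + 1 := by omega
      rw [hk, hMsymm]
      have := hu.mat (L - (a + 1 - s)) (by omega)
      rw [this]
      omega
  · intro a ha b hb hab
    rcases le_or_gt a s with h1 | h1 <;> rcases le_or_gt b s with h2 | h2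
    · rw [hwval_lo a h1, hwval_lo b h2] at hab
      exact hq.inj a (by omega) b (by omega) hab
    · rw [hwval_lo a h1, hwval_hi b h2] at hab
      exact absurd hab (hdisj (L - (b - s)) (by omega) (by omega) a h1)
    · rw [hwval_hi a h1, hwval_lo b h2] at hab
      exact absurd hab.symm (hdisj (L - (a - s)) (by omega) (by omega) b h2)
    · rw [hwval_hi a h1, hwval_hi b h2] at hab
      have := hu.inj (L - (a - s)) (by omega) (L - (b - s)) (by omega) hab
      omega
  · rw [hwval_hi n (by omega)]
    have : L - (n - s) = i := by omega
    rw [this]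
  · rcases Nat.lt_or_ge (s) (n - 1) with h | h
    · rw [hwval_hi (n - 1) h]
      have : L - (n - 1 - s) = i + 1 := by omega
      rw [this]
    · have h1 : n - 1 = s := by omega
      have h2 : i + 1 = L := by omega
      rw [h1, hwval_lo s le_rfl, hqs, h2]

end MatchedGraph

lemma enat_exists_of_le_coe {A : ℕ∞} {i : ℕ} (h : A ≤ (i : ℕ∞)) :
    ∃ a : ℕ, A = (a : ℕ∞) ∧ a ≤ i := by
  lift A to ℕ using (h.trans_lt (WithTop.coe_lt_top i)).ne
  exact ⟨A, rfl, by exact_mod_cast h⟩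

lemma enat_exists_of_ne_top {A : ℕ∞} (h : A ≠ ⊤) : ∃ a : ℕ, A = (a : ℕ∞) := by
  lift A to ℕ using h
  exact ⟨A, rfl⟩

namespace MatchedGraph

lemma PathFun.isMinlevelPath {g : MatchedGraph V} {w : ℕ → V} {n : ℕ}
    (h : PathFun g w n) (hm : g.minlevel (w n) = (n : ℕ∞)) :
    g.IsMinlevelPath (pathOf w n) (w 0) (w n) :=
  ⟨h.altPathFrom, by rw [PathFun.length_sub_one]; exact hm.symm⟩

lemma PathFun.isPred {g : MatchedGraph V} {w : ℕ → V} {n : ℕ}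
    (h : PathFun g w n) (hn : 1 ≤ n) (hm : g.minlevel (w n) = (n : ℕ∞)) :
    g.IsPred (w (n - 1)) (w n) := by
  refine ⟨pathOf w n, w 0, h.isMinlevelPath hm, by simp; omega, ?_⟩
  rw [pathOf_length]
  have h1 : n + 1 - 2 = n - 1 := by omega
  rw [h1, pathOf_getD w n (n-1) (by omega)]

end MatchedGraph


/-- Let `v` have minimum tenacity `t_m < l_m`. Then every
`maxlevel(v)` path contains a unique bridge of tenacity `t_m`. -/
theorem unique_bridge_on_maxlevelPath (g : MatchedGraph V) (v : V)
    (h1 : g.tenacity v = g.tm) (h2 : g.tm < g.lm)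
    (p : List V) (f : V) (hp : g.IsMaxlevelPath p f v) :
    ∃! i : ℕ, i + 1 < p.length ∧
      g.IsBridge (p.getD i f) (p.getD (i + 1) f) ∧
      g.etenacity (p.getD i f) (p.getD (i + 1) f) = g.tm := by
  classical
  obtain ⟨hapf, hmaxlen⟩ := hp
  obtain ⟨hPF, h0, hLast, hlen1⟩ := MatchedGraph.unpack hapf
  set u : ℕ → V := fun i => p.getD i f with hu
  set L : ℕ := p.length - 1 with hL
  have hLastu : u L = v := hLast
  have h0u : u 0 = f := h0
  -- tm is finite
  have htm_ne : g.tm ≠ ⊤ := (h2.trans_le le_top).ne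
  obtain ⟨T, hT⟩ := enat_exists_of_ne_top htm_ne
  have hten_ne : g.tenacity v ≠ ⊤ := by rw [h1]; exact htm_ne
  have htenv : g.tenacity v = g.lvl L v + g.lvl (L + 1) v := g.tenacity_eq_lvl L v
  have hlvlL_ne : g.lvl L v ≠ ⊤ := by
    intro hcon; rw [hcon] at htenv; simp [htenv] at hten_ne
  have hlvlL1_ne : g.lvl (L + 1) v ≠ ⊤ := by
    intro hcon; rw [hcon] at htenv; simp [htenv] at hten_ne
  obtain ⟨a, haa⟩ := enat_exists_of_ne_top hlvlL_ne
  obtain ⟨b, hbb⟩ := enat_exists_of_ne_top hlvlL1_ne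
  have ha2 : a % 2 = L % 2 := g.lvl_parity haa
  have hb2 : b % 2 = (L + 1) % 2 := g.lvl_parity hbb
  -- maxlevel v = L forces lvl L v = L
  have hmaxv : ((L : ℕ) : ℕ∞) = max (g.lvl L v) (g.lvl (L + 1) v) := by
    rw [← g.maxlevel_eq_lvl L v]; exact hmaxlen
  have haL : a = L := by
    rw [haa, hbb] at hmaxv
    rcases le_total (a : ℕ∞) (b : ℕ∞) with h | h
    · rw [max_eq_right h] at hmaxv
      have : L = b := by exact_mod_cast hmaxv
      omega
    · rw [max_eq_left h] at hmaxv
      have : L = a := by exact_mod_cast hmaxv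
      omega
  have hbL : b < L := by
    rw [haa, hbb] at hmaxv
    rcases le_total (a : ℕ∞) (b : ℕ∞) with h | h
    · rw [max_eq_right h] at hmaxv
      have : L = b := by exact_mod_cast hmaxv
      omega
    · have hble : b ≤ a := by exact_mod_cast h
      omega
  set s : ℕ := b with hs
  have hTLs : T = L + s := by
    have : (T : ℕ∞) = ((L + s : ℕ) : ℕ∞) := by
      rw [← hT, ← h1, htenv, haa, hbb, haL]
      push_cast
      ring
    exact_mod_cast this
  have hT2 : T % 2 = 1 := by omega
  have hL1 : 1 ≤ L := by omega
  have hlvlLv : g.lvl L v = (L : ℕ∞) := by rw [haa, haL]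
  have hlvlsv : g.lvl (L + 1) v = (s : ℕ∞) := hbb
  -- tenacity lower bound
  have htenge : ∀ x : V, (T : ℕ∞) ≤ g.tenacity x := by
    intro x; rw [← hT]; exact g.tm_le_tenacity x
  -- prefix bounds
  have hpre : ∀ i, i ≤ L → g.lvl i (u i) ≤ (i : ℕ∞) := by
    intro i hi
    have h3 := (hPF.mono hi).lvl_le
    exact h3
  -- definition of r
  have hPL : g.minlevel (u L) < ((L : ℕ) : ℕ∞) := by
    rw [hLastu, g.minlevel_eq_lvl L v, hlvlLv, hlvlsv]
    calc min ((L:ℕ):ℕ∞) ((s:ℕ):ℕ∞) ≤ (s : ℕ∞) := min_le_right _ _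
    _ < (L : ℕ∞) := by exact_mod_cast hbL
  have hPLex : ∃ jj, g.minlevel (u jj) < ((jj : ℕ) : ℕ∞) := ⟨L, hPL⟩
  set j0 := Nat.find hPLex with hj0def
  have hj0 : g.minlevel (u j0) < ((j0 : ℕ) : ℕ∞) := Nat.find_spec hPLex
  have hj0L : j0 ≤ L := Nat.find_min' hPLex hPL
  have hj0pos : 1 ≤ j0 := by
    rcases Nat.eq_zero_or_pos j0 with h | h
    · rw [h] at hj0; simp at hj0
    · exact h
  set r : ℕ := j0 - 1 with hr
  have hrL : r + 1 ≤ L := by omega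
  have hminr : ∀ i, i ≤ r → g.minlevel (u i) = (i : ℕ∞) := by
    intro i hi
    have hnot : ¬ g.minlevel (u i) < ((i : ℕ) : ℕ∞) := Nat.find_min hPLex (by omega)
    have hle : g.minlevel (u i) ≤ (i : ℕ∞) := by
      rw [g.minlevel_eq_lvl i (u i)]
      exact le_trans (min_le_left _ _) (hpre i (by omega))
    exact le_antisymm hle (not_lt.1 hnot)
  have hlvlr : ∀ i, i ≤ r → g.lvl i (u i) = (i : ℕ∞) := by
    intro i hi
    refine le_antisymm (hpre i (by omega)) ?_
    calc (i : ℕ∞) = g.minlevel (u i) := (hminr i hi).symm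
    _ ≤ g.lvl i (u i) := by
        rw [g.minlevel_eq_lvl i (u i)]; exact min_le_left _ _
  have hmr1 : g.minlevel (u (r + 1)) < ((r + 1 : ℕ) : ℕ∞) := by
    have : r + 1 = j0 := by omega
    rw [this]; exact_mod_cast hj0
  have hlvlLuL : g.lvl L (u L) = (L : ℕ∞) := by rw [hLastu]; exact hlvlLv
  -- CLAIM C : s ≤ r + 1
  have hC : s ≤ r + 1 := by
    have hmr1' := hmr1
    rw [g.minlevel_eq_lvl (r+1) (u (r+1)), min_lt_iff] at hmr1'
    rcases hmr1' with hcase | hcase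
    · -- B2 : lvl (r+1) (u (r+1)) < r+1
      obtain ⟨qv, m, hqPF, hqend, hmpar, hmeq⟩ :=
        g.lvl_exists (show g.lvl (r+1) (u (r+1)) ≠ ⊤ from (hcase.trans_le le_top).ne)
      have hmlt : m < r + 1 := by
        rw [hmeq] at hcase
        exact_mod_cast hcase
      have hmr2 : m + 2 ≤ r + 1 := by omega
      by_cases hX : ∃ t, (r + 1 < t ∧ t ≤ L ∧ ∃ jj, jj ≤ m ∧ qv jj = u t)
      · obtain ⟨t0, ht0⟩ := hX
        set X : ℕ → Prop := fun t => (r + 1 < t ∧ t ≤ L ∧ ∃ jj, jj ≤ m ∧ qv jj = u t) with hXdef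
        have hXt' : X (Nat.findGreatest X L) := Nat.findGreatest_spec ht0.2.1 ht0
        set t' := Nat.findGreatest X L with ht'def
        obtain ⟨ht'1, ht'2, jj, hjjm, hjj⟩ := hXt'
        have hgr : ∀ k, t' < k → k ≤ L → ¬ X k := fun k hk1 hk2 =>
          Nat.findGreatest_is_greatest hk1 hk2
        have hjjm' : jj < m := by
          rcases eq_or_lt_of_le hjjm with h | h
          · exfalso
            rw [h, hqend] at hjj
            have := hPF.inj (r+1) (by omega) t' (by omega) hjj
            omega
          · exact h
        by_cases hteq : t' = L
        · have hjjv : qv jj = v := by rw [hjj, hteq, hLastu]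
          by_cases hpar : jj % 2 = L % 2
          · exfalso
            have hb1 : g.lvl jj (qv jj) ≤ (jj : ℕ∞) := (hqPF.mono hjjm).lvl_le
            rw [hjjv, g.lvl_congr (show jj % 2 = L % 2 from hpar) v, hlvlLv] at hb1
            have : L ≤ jj := by exact_mod_cast hb1
            omega
          · have hb1 : g.lvl jj (qv jj) ≤ (jj : ℕ∞) := (hqPF.mono hjjm).lvl_le
            rw [hjjv, g.lvl_congr (show jj % 2 = (L+1) % 2 by omega) v, hlvlsv] at hb1
            have : s ≤ jj := by exact_mod_cast hb1
            omega
        · have ht'L : t' < L := lt_of_le_of_ne ht'2 hteq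
          by_cases hpar : jj % 2 = t' % 2
          · exfalso
            have hnab : ∀ t'', t' < t'' → t'' ≤ L → ∀ j', j' ≤ jj → qv j' ≠ u t'' := by
              intro t'' h1' h2' j' hj' hcon
              exact hgr t'' h1' h2' ⟨by omega, h2', j', by omega, hcon⟩
            have hglue := g.glue_bound hPF hqPF hlvlLuL ht'2 hjjm hjj hpar hnab
            omega
          · have h3 : (T : ℕ∞) ≤ g.tenacity (u t') := htenge _
            rw [g.tenacity_eq_lvl jj (u t')] at h3
            have hb1 : g.lvl jj (u t') ≤ (jj : ℕ∞) := by
              rw [← hjj]; exact (hqPF.mono hjjm).lvl_le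
            have hb2' : g.lvl (jj + 1) (u t') ≤ (t' : ℕ∞) := by
              rw [g.lvl_congr (show (jj+1) % 2 = t' % 2 by omega) (u t')]
              exact hpre t' (by omega)
            have h4 : (T : ℕ∞) ≤ ((jj + t' : ℕ) : ℕ∞) := by
              refine le_trans h3 ?_
              push_cast
              exact add_le_add hb1 hb2'
            have h5 : T ≤ jj + t' := by exact_mod_cast h4
            omega
      · exfalso
        push_neg at hX
        have hnab : ∀ t'', r + 1 < t'' → t'' ≤ L → ∀ j', j' ≤ m → qv j' ≠ u t'' := by
          intro t'' h1' h2' j' hj' hcon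
          exact hX t'' h1' h2' j' hj' hcon
        have hglue := g.glue_bound hPF hqPF hlvlLuL hrL (le_refl m) hqend (by omega) hnab
        omega
    · -- B1 : lvl (r+2) (u (r+1)) < r+1
      obtain ⟨l, hleq, hlle⟩ := enat_exists_of_le_coe hcase.le
      have hlpar : l % 2 = (r + 2) % 2 := g.lvl_parity hleq
      have hllt : l < r + 1 := by
        have := hleq ▸ hcase
        exact_mod_cast this
      have h3 : (T : ℕ∞) ≤ g.tenacity (u (r+1)) := htenge _
      rw [g.tenacity_eq_lvl (r+1) (u (r+1))] at h3
      have hb1 : g.lvl (r+1) (u (r+1)) ≤ ((r+1 : ℕ) : ℕ∞) := by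
        have := hpre (r+1) hrL
        exact_mod_cast this
      have h4 : (T : ℕ∞) ≤ (((r+1) + l : ℕ) : ℕ∞) := by
        refine le_trans h3 ?_
        rw [hleq]
        push_cast
        exact add_le_add hb1 le_rfl
      have h5 : T ≤ (r+1) + l := by exact_mod_cast h4
      omega
  -- a fixed minlevel path of v
  obtain ⟨qv, s', hqPF, hqend, hs'par, hs'eq⟩ :=
    g.lvl_exists (show g.lvl (L+1) v ≠ ⊤ by rw [hlvlsv]; simp)
  have hss' : s' = s := by
    rw [hlvlsv] at hs'eq
    exact_mod_cast hs'eq.symm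
  subst hss'
  have hqsuL : qv s = u L := by rw [hqend]; exact hLastu.symm
  -- disjointness of the minlevel path from the suffix of p
  have hdisj : ∀ k, r < k → k < L → ∀ jj, jj ≤ s → qv jj ≠ u k := by
    by_contra hcon
    push_neg at hcon
    obtain ⟨k, hk1, hk2, jj, hjjs, hjjeq⟩ := hcon
    set X : ℕ → Prop := fun t => r < t ∧ t < L ∧ ∃ j', j' ≤ s ∧ qv j' = u t with hXdef
    have hXk : X k := ⟨hk1, hk2, jj, hjjs, hjjeq⟩
    have hXt' : X (Nat.findGreatest X L) := Nat.findGreatest_spec (le_of_lt hk2) hXk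
    set t' := Nat.findGreatest X L with ht'def
    obtain ⟨ht'1, ht'2, j', hj's, hj'⟩ := hXt'
    have hgr : ∀ k', t' < k' → k' ≤ L → ¬ X k' := fun k' h1' h2' =>
      Nat.findGreatest_is_greatest h1' h2'
    have hj'lt : j' < s := by
      rcases eq_or_lt_of_le hj's with h | h
      · exfalso
        rw [h, hqsuL] at hj'
        have := hPF.inj L (le_refl L) t' (by omega) hj'
        omega
      · exact h
    by_cases hpar : j' % 2 = t' % 2
    · have hnab : ∀ t'', t' < t'' → t'' ≤ L → ∀ j'', j'' ≤ j' → qv j'' ≠ u t'' := by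
        intro t'' h1' h2' j'' hj'' hcon2
        rcases eq_or_lt_of_le h2' with hEq | hLt
        · rw [hEq, ← hqsuL] at hcon2
          have := hqPF.inj j'' (by omega) s (le_refl s) hcon2
          omega
        · exact hgr t'' h1' hLt.le ⟨by omega, hLt, j'', by omega, hcon2⟩
      have hglue := g.glue_bound hPF hqPF hlvlLuL (le_of_lt ht'2) hj's hj' hpar hnab
      omega
    · have h3 : (T : ℕ∞) ≤ g.tenacity (u t') := htenge _
      rw [g.tenacity_eq_lvl j' (u t')] at h3
      have hb1 : g.lvl j' (u t') ≤ (j' : ℕ∞) := by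
        rw [← hj']; exact (hqPF.mono hj's).lvl_le
      have hb2' : g.lvl (j' + 1) (u t') ≤ (t' : ℕ∞) := by
        rw [g.lvl_congr (show (j'+1) % 2 = t' % 2 by omega) (u t')]
        exact hpre t' (by omega)
      have h4 : (T : ℕ∞) ≤ ((j' + t' : ℕ) : ℕ∞) := by
        refine le_trans h3 ?_
        push_cast
        exact add_le_add hb1 hb2'
      have h5 : T ≤ j' + t' := by exact_mod_cast h4
      omega
  -- levels of the vertices after the bridge
  have hafter : ∀ i, r < i → i ≤ L →
      g.lvl (i + 1) (u i) = ((T - i : ℕ) : ℕ∞) ∧ g.lvl i (u i) = (i : ℕ∞) := by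
    intro i hi1 hi2
    have hup : g.lvl (i + 1) (u i) ≤ ((T - i : ℕ) : ℕ∞) := by
      rcases eq_or_lt_of_le hi2 with hEq | hLt
      · subst hEq
        rw [hLastu, hlvlsv]
        have h9 : s = T - L := by omega
        rw [h9]
      · have hdisj' : ∀ k, i ≤ k → k < L → ∀ jj, jj ≤ s → qv jj ≠ u k := fun k hk1 hk2 =>
          hdisj k (by omega) hk2
        obtain ⟨w, hwPF, hwn, hwn1, hw0⟩ := g.revglue hPF hqPF hqsuL hLt hdisj' (by omega)
        have hb := hwPF.lvl_le
        rw [hwn] at hb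
        rw [g.lvl_congr (show (s + (L - i)) % 2 = (i+1) % 2 by omega) (u i)] at hb
        have h9 : s + (L - i) = T - i := by omega
        rw [h9] at hb
        exact hb
    obtain ⟨b', hb'eq, hb'le⟩ := enat_exists_of_le_coe hup
    have h3 : (T : ℕ∞) ≤ g.tenacity (u i) := htenge _
    rw [g.tenacity_eq_lvl i (u i)] at h3
    obtain ⟨a', ha'eq, ha'le⟩ := enat_exists_of_le_coe (hpre i hi2)
    rw [ha'eq, hb'eq] at h3
    have h5 : T ≤ a' + b' := by exact_mod_cast h3
    have heq2 : a' = i ∧ b' = T - i := by omega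
    constructor
    · rw [hb'eq]; exact_mod_cast heq2.2
    · rw [ha'eq]; exact_mod_cast heq2.1
  have hT2r : T ≤ 2 * r + 1 := by
    obtain ⟨hA, hB⟩ := hafter (r+1) (by omega) hrL
    have hmm : g.minlevel (u (r+1)) = min (((r+1 : ℕ)) : ℕ∞) ((T - (r+1) : ℕ) : ℕ∞) := by
      rw [g.minlevel_eq_lvl (r+1) (u (r+1)), hB, hA]
    rw [hmm, min_lt_iff] at hmr1
    rcases hmr1 with h | h
    · exfalso; exact lt_irrefl _ h
    · have : T - (r+1) < r + 1 := by exact_mod_cast h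
      omega
  have hminafter : ∀ i, r < i → i ≤ L → g.minlevel (u i) = ((T - i : ℕ) : ℕ∞) := by
    intro i hi1 hi2
    obtain ⟨hA, hB⟩ := hafter i hi1 hi2
    rw [g.minlevel_eq_lvl i (u i), hB, hA]
    have h6 : T - i ≤ i := by omega
    exact min_eq_right (by exact_mod_cast h6)
  -- edges before the bridge are props
  have hprop_lo : ∀ i, i < r → g.IsPred (u i) (u (i + 1)) := by
    intro i hi
    have hpk : g.PathFun u (i + 1) := hPF.mono (by omega)
    have h7 := hpk.isPred (by omega) (hminr (i + 1) (by omega))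
    have he : i + 1 - 1 = i := by omega
    rwa [he] at h7
  -- edges after the bridge are props
  have hprop_hi : ∀ i, r < i → i < L → g.IsPred (u (i + 1)) (u i) := by
    intro i hi1 hi2
    have hdisj' : ∀ k, i ≤ k → k < L → ∀ jj, jj ≤ s → qv jj ≠ u k := fun k hk1 hk2 =>
      hdisj k (by omega) hk2
    obtain ⟨w, hwPF, hwn, hwn1, hw0⟩ := g.revglue hPF hqPF hqsuL hi2 hdisj' (by omega)
    have hmw : g.minlevel (w (s + (L - i))) = ((s + (L - i) : ℕ) : ℕ∞) := by
      rw [hwn, hminafter i hi1 (le_of_lt hi2)]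
      norm_cast
      omega
    have h7 := hwPF.isPred (by omega) hmw
    rwa [hwn1, hwn] at h7
  -- the bridge edge
  have hrltL : r < L := by omega
  have hadjr : g.adj (u r) (u (r + 1)) := hPF.adj r hrltL
  have hmatr := hPF.mat r hrltL
  obtain ⟨hA1, hB1⟩ := hafter (r + 1) (by omega) hrL
  have hlvl_r : g.lvl r (u r) = (r : ℕ∞) := hlvlr r (le_refl r)
  have hcast : ((r : ℕ) : ℕ∞) + ((T - (r + 1) : ℕ) : ℕ∞) + 1 = (T : ℕ∞) := by
    have h9 : r + (T - (r + 1)) + 1 = T := by omega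
    exact_mod_cast congrArg (fun x : ℕ => (x : ℕ∞)) h9
  have heten : g.etenacity (u r) (u (r + 1)) = g.tm := by
    rw [hT]
    unfold MatchedGraph.etenacity
    by_cases hrp : r % 2 = 1
    · rw [if_pos (hmatr.mpr hrp)]
      have e1 : g.oddlevel (u r) = (r : ℕ∞) := by
        rw [← hlvl_r]
        unfold MatchedGraph.lvl
        rw [if_neg (by omega)]
      have e2 : g.oddlevel (u (r + 1)) = ((T - (r + 1) : ℕ) : ℕ∞) := by
        rw [← hA1]
        unfold MatchedGraph.lvl
        rw [if_neg (by omega)]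
      rw [e1, e2]
      exact hcast
    · rw [if_neg (fun hM => hrp (hmatr.mp hM))]
      have e1 : g.evenlevel (u r) = (r : ℕ∞) := by
        rw [← hlvl_r]
        unfold MatchedGraph.lvl
        rw [if_pos (by omega)]
      have e2 : g.evenlevel (u (r + 1)) = ((T - (r + 1) : ℕ) : ℕ∞) := by
        rw [← hA1]
        unfold MatchedGraph.lvl
        rw [if_pos (by omega)]
      rw [e1, e2]
      exact hcast
  -- the bridge edge is not a prop
  have hnotprop : ¬ g.IsPropEdge (u r) (u (r + 1)) := by
    rintro (⟨pp, ff, ⟨happ, hppmin⟩, hpp2, hppd⟩ | ⟨pp, ff, ⟨happ, hppmin⟩, hpp2, hppd⟩)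
    · obtain ⟨hWPF, hW0, hWL, hWlen⟩ := MatchedGraph.unpack happ
      set n' := pp.length - 1 with hn'
      have hmineq : g.minlevel (u (r + 1)) = ((T - (r + 1) : ℕ) : ℕ∞) :=
        hminafter (r + 1) (by omega) hrL
      have hn'eq : n' = T - (r + 1) := by
        rw [hmineq] at hppmin
        exact_mod_cast hppmin
      have hn'1 : 1 ≤ n' := by omega
      have hmat' := hWPF.mat (n' - 1) (by omega)
      have hidx : n' - 1 + 1 = n' := by omega
      rw [hidx] at hmat'
      have hmat2 : (g.M (pp.getD (n' - 1) ff) (pp.getD n' ff) ↔ (n' - 1) % 2 = 1) := hmat'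
      have hpen : pp.getD (n' - 1) ff = u r := by
        have h9 : pp.length - 2 = n' - 1 := by omega
        rw [← h9]
        exact hppd
      rw [hpen, hWL] at hmat2
      by_cases hrp : r % 2 = 1
      · have h9 := hmat2.mp (hmatr.mpr hrp)
        omega
      · have h9 : ¬ (n' - 1) % 2 = 1 := fun hcon => hrp (hmatr.mp (hmat2.mpr hcon))
        omega
    · obtain ⟨hWPF, hW0, hWL, hWlen⟩ := MatchedGraph.unpack happ
      set n' := pp.length - 1 with hn'
      have hmineq : g.minlevel (u r) = (r : ℕ∞) := hminr r (le_refl r)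
      have hn'eq : n' = r := by
        rw [hmineq] at hppmin
        exact_mod_cast hppmin
      have hn'1 : 1 ≤ n' := by omega
      have hmat' := hWPF.mat (n' - 1) (by omega)
      have hidx : n' - 1 + 1 = n' := by omega
      rw [hidx] at hmat'
      have hmat2 : (g.M (pp.getD (n' - 1) ff) (pp.getD n' ff) ↔ (n' - 1) % 2 = 1) := hmat'
      have hpen : pp.getD (n' - 1) ff = u (r + 1) := by
        have h9 : pp.length - 2 = n' - 1 := by omega
        rw [← h9]
        exact hppd
      rw [hpen, hWL] at hmat2
      have hmat3 : g.M (u r) (u (r + 1)) ↔ (n' - 1) % 2 = 1 := by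
        constructor
        · intro hM; exact hmat2.mp (g.M_symm _ _ hM)
        · intro h9; exact g.M_symm _ _ (hmat2.mpr h9)
      by_cases hrp : r % 2 = 1
      · have h9 := hmat3.mp (hmatr.mpr hrp)
        omega
      · have h9 : ¬ (n' - 1) % 2 = 1 := fun hcon => hrp (hmatr.mp (hmat3.mpr hcon))
        omega
  -- assembly
  have hplen : p.length = L + 1 := by omega
  refine ⟨r, ⟨by omega, ⟨hadjr, hnotprop⟩, heten⟩, ?_⟩
  rintro y ⟨hy1, hy2, hy3⟩
  have hyL : y < L := by omega
  by_contra hne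
  rcases lt_or_gt_of_ne hne with hlt | hgt
  · exact hy2.2 (Or.inl (hprop_lo y hlt))
  · exact hy2.2 (Or.inr (hprop_hi y hgt hyL))
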